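/- Let j = e^{2πi/3} and define 2×2 complex matrices a = diag(1, -1), b = [[-j²/2, (j-1)/2],[(1-j)/2, j²/2]], c = conj(b) (entrywise complex conjugate), d = [[-3/2, 3/2],[-3/2, 3/2]]. Then a+b+c+d = 0, a²+b²+c²+d² = 0, a³+b³+c³+d³ = 0, a⁴+b⁴+c⁴+d⁴ = 0, and d is nilpotent while a, b, c are not. -/

import Mathlib

lemma not_nilp_of_det (M : Matrix (Fin 2) (Fin 2) ℂ) (h : M.det ≠ 0) :
    ¬ IsNilpotent M := by
  rintro ⟨n, hn⟩
  have h2 := congrArg Matrix.det hn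
  rw [Matrix.det_pow] at h2
  simp at h2
  apply h
  exact h2.1

theorem stmt16 (j : ℂ) (hj : j = Complex.exp (2 * Real.pi * Complex.I / 3))
    (a b c d : Matrix (Fin 2) (Fin 2) ℂ)
    (ha : a = !![1, 0; 0, -1])
    (hb : b = !![-(j ^ 2) / 2, (j - 1) / 2; (1 - j) / 2, j ^ 2 / 2])
    (hc : c = b.map (starRingEnd ℂ))
    (hd : d = !![-(3 / 2), 3 / 2; -(3 / 2), 3 / 2]) :
    a + b + c + d = 0 ∧
    a ^ 2 + b ^ 2 + c ^ 2 + d ^ 2 = 0 ∧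
    a ^ 3 + b ^ 3 + c ^ 3 + d ^ 3 = 0 ∧
    a ^ 4 + b ^ 4 + c ^ 4 + d ^ 4 = 0 ∧
    IsNilpotent d ∧ ¬ IsNilpotent a ∧ ¬ IsNilpotent b ∧ ¬ IsNilpotent c := by
  have hj3 : j ^ 3 = 1 := by
    rw [hj, ← Complex.exp_nat_mul]
    rw [show (3:ℕ) * (2 * Real.pi * Complex.I / 3) = 2 * Real.pi * Complex.I by
      push_cast; ring]
    exact Complex.exp_two_pi_mul_I
  have hj1 : j ≠ 1 := by
    rw [hj, Ne, Complex.exp_eq_one_iff]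
    rintro ⟨n, hn⟩
    have hπ : (Real.pi : ℂ) ≠ 0 := by exact_mod_cast Real.pi_ne_zero
    have hI : Complex.I ≠ 0 := Complex.I_ne_zero
    have h3 : (n : ℂ) * 3 = 1 := by
      have h2 : (Real.pi * Complex.I : ℂ) ≠ 0 := mul_ne_zero hπ hI
      field_simp at hn
      apply mul_right_cancel₀ h2
      linear_combination (-((Real.pi : ℂ) * Complex.I)) * hn
    have h3' : n * 3 = 1 := by exact_mod_cast h3
    omega
  have hsum : j ^ 2 + j + 1 = 0 := by
    have h := hj3
    have h2 : (j - 1) * (j ^ 2 + j + 1) = 0 := by linear_combination hj3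
    rcases mul_eq_zero.mp h2 with h3 | h3
    · exact absurd (by linear_combination h3) hj1
    · exact h3
  have hj0 : j ≠ 0 := by
    intro h; rw [h] at hj3; norm_num at hj3
  have hconj : (starRingEnd ℂ) j = j ^ 2 := by
    have h1 : (starRingEnd ℂ) j * j = 1 := by
      rw [hj, ← Complex.exp_conj, ← Complex.exp_add]
      rw [show (starRingEnd ℂ) (2 * Real.pi * Complex.I / 3) +
          2 * Real.pi * Complex.I / 3 = 0 by
        simp [map_div₀, map_mul, Complex.conj_ofReal, Complex.conj_I, map_ofNat]; ring]
      exact Complex.exp_zero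
    have h2 : j ^ 2 * j = 1 := by linear_combination hj3
    exact mul_right_cancel₀ hj0 (h1.trans h2.symm)
  have hj4 : j ^ 4 = j := by linear_combination j * hj3
  have hj22 : (j ^ 2) ^ 2 = j := by linear_combination j * hj3
  subst ha hb hc hd
  have hcm : (!![-(j ^ 2) / 2, (j - 1) / 2; (1 - j) / 2, j ^ 2 / 2]).map (starRingEnd ℂ)
      = !![-j / 2, (j ^ 2 - 1) / 2; (1 - j ^ 2) / 2, j / 2] := by
    ext i k
    fin_cases i <;> fin_cases k <;>
      simp [Matrix.map_apply, map_div₀, map_sub, map_one, map_neg, map_pow, map_ofNat, hconj, hj4, hj22]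
    all_goals ring
  rw [hcm]
  have e2 : j ^ 2 = -1 - j := by linear_combination hsum
  have hA2 : (!![(1:ℂ), 0; 0, -1]) ^ 2 = 1 := by
    rw [pow_two]
    ext i k
    fin_cases i <;> fin_cases k <;>
      simp [Matrix.mul_apply, Fin.sum_univ_two, Matrix.one_apply]
  have hB2 : (!![-(j ^ 2) / 2, (j - 1) / 2; (1 - j) / 2, j ^ 2 / 2]) ^ 2 = j • 1 := by
    rw [pow_two]
    ext i k
    fin_cases i <;> fin_cases k <;>
      simp [Matrix.mul_apply, Fin.sum_univ_two, Matrix.one_apply, e2]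
    all_goals ring
  have hC2 : (!![-j / 2, (j ^ 2 - 1) / 2; (1 - j ^ 2) / 2, j / 2]) ^ 2 = (-1 - j) • (1 : Matrix (Fin 2) (Fin 2) ℂ) := by
    rw [pow_two]
    ext i k
    fin_cases i <;> fin_cases k <;>
      simp [Matrix.mul_apply, Fin.sum_univ_two, Matrix.one_apply, e2]
    all_goals ring
  have hD2 : (!![-(3 / 2 : ℂ), 3 / 2; -(3 / 2), 3 / 2]) ^ 2 = 0 := by
    rw [pow_two]
    ext i k
    fin_cases i <;> fin_cases k <;>
      simp [Matrix.mul_apply, Fin.sum_univ_two]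
    all_goals ring
  refine ⟨?_, ?_, ?_, ?_, ⟨2, hD2⟩, ?_, ?_, ?_⟩
  · ext i k
    fin_cases i <;> fin_cases k <;> simp [Matrix.add_apply, e2]
    all_goals ring
  · rw [hA2, hB2, hC2, hD2]
    ext i k
    fin_cases i <;> fin_cases k <;> simp [Matrix.one_apply]
  · have h3 : ∀ M : Matrix (Fin 2) (Fin 2) ℂ, M ^ 3 = M ^ 2 * M := fun M => by
      rw [pow_succ]
    rw [h3, h3, h3, h3, hA2, hB2, hC2, hD2, one_mul, zero_mul, smul_mul_assoc,
      smul_mul_assoc, one_mul, one_mul]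
    ext i k
    fin_cases i <;> fin_cases k <;> simp [Matrix.add_apply, Matrix.smul_apply, e2]
    all_goals (ring_nf; simp [e2, hj3, hj4]; try ring)
  · have h4 : ∀ M : Matrix (Fin 2) (Fin 2) ℂ, M ^ 4 = (M ^ 2) ^ 2 := fun M => by
      rw [← pow_mul]
    rw [h4, h4, h4, h4, hA2, hB2, hC2, hD2]
    ext i k
    fin_cases i <;> fin_cases k <;>
      simp [smul_pow, Matrix.add_apply, Matrix.smul_apply, Matrix.one_apply, e2]
    all_goals (ring_nf; simp [e2, hj3, hj4]; try ring)
  · apply not_nilp_of_det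
    simp [Matrix.det_fin_two_of]
  · apply not_nilp_of_det
    simp only [Matrix.det_fin_two_of]
    intro h
    apply hj0
    linear_combination -h + (1/4) * hsum - (j/4) * hj3
  · apply not_nilp_of_det
    simp only [Matrix.det_fin_two_of]
    intro h
    have h9 : j = -1 := by linear_combination h - (j/4) * hj3 + (3/4) * hsum
    rw [h9] at hj3
    norm_num at hj3
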